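/- Under Assumptions 1 and 2, for any step size 0 < η ≤ 1/(L(K+1)), the PIAG direction satisfies −‖d_k‖² ≤ −(μ/4) F_{k+1} + ηL Σ_{j=(k−K)_+}^{k−1} ‖d_j‖², where F_{k+1} = F(x_{k+1}) − F(x*). -/

import Mathlib

open Finset

local notation "⟪" x ", " y "⟫" => @inner ℝ _ _ x y

lemma grad_convex_lb {E : Type*} [NormedAddCommGroup E] [InnerProductSpace ℝ E] [CompleteSpace E]
    {g : E → ℝ} (hc : ConvexOn ℝ Set.univ g) {x G : E} (hg : HasGradientAt g G x) (y : E) :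
    g x + ⟪G, y - x⟫ ≤ g y := by
  have hline : HasDerivAt (fun t : ℝ => x + t • (y - x)) (y - x) 0 := by
    simpa using ((hasDerivAt_id (0:ℝ)).smul_const (y - x)).const_add x
  have hφ : HasDerivAt (fun t : ℝ => g (x + t • (y - x))) ⟪G, y - x⟫ 0 := by
    have h0 : HasFDerivAt g (InnerProductSpace.toDual ℝ E G) (x + (0:ℝ) • (y - x)) := by
      simpa using hg.hasFDerivAt
    have h := h0.comp_hasDerivAt 0 hline
    simp only [InnerProductSpace.toDual_apply_apply] at h
    exact h
  have htend : Filter.Tendsto (slope (fun t : ℝ => g (x + t • (y - x))) 0)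
      (nhdsWithin 0 (Set.Ioi 0)) (nhds ⟪G, y - x⟫) := by
    refine (hasDerivAt_iff_tendsto_slope.1 hφ).mono_left (nhdsWithin_mono 0 ?_)
    intro t ht
    exact ne_of_gt ht
  have hbound : ∀ᶠ t in nhdsWithin (0:ℝ) (Set.Ioi 0),
      slope (fun t : ℝ => g (x + t • (y - x))) 0 t ≤ g y - g x := by
    filter_upwards [Ioc_mem_nhdsGT (zero_lt_one)] with t ht
    have hcomb : g ((1 - t) • x + t • y) ≤ (1 - t) * g x + t * g y :=
      hc.2 (Set.mem_univ x) (Set.mem_univ y) (by linarith [ht.2]) ht.1.le (by ring)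
    have heq : (1 - t) • x + t • y = x + t • (y - x) := by module
    rw [heq] at hcomb
    have hsl : slope (fun t : ℝ => g (x + t • (y - x))) 0 t
        = (g (x + t • (y - x)) - g x) / t := by
      simp [slope_def_field]
    rw [hsl, div_le_iff₀ ht.1]
    nlinarith [ht.1]
  have := le_of_tendsto htend hbound
  linarith

lemma prox_vi {E : Type*} [NormedAddCommGroup E] [InnerProductSpace ℝ E]
    {r : E → ℝ} (hr : ConvexOn ℝ Set.univ r) {η : ℝ} (hη : 0 < η) {a u : E}
    (hmin : ∀ z, 1 / 2 * ‖a - u‖ ^ 2 + η * r a ≤ 1 / 2 * ‖z - u‖ ^ 2 + η * r z) (z : E) :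
    ⟪a - u, a - z⟫ ≤ η * (r z - r a) := by
  set C : ℝ := ⟪a - u, z - a⟫ + η * (r z - r a) with hC
  set B : ℝ := ‖z - a‖ ^ 2 with hBdef
  have hB : 0 ≤ B := sq_nonneg _
  have key : ∀ t : ℝ, 0 < t → t ≤ 1 → 0 ≤ C + t / 2 * B := by
    intro t ht ht1
    have h1 := hmin (a + t • (z - a))
    have hrz : r (a + t • (z - a)) ≤ (1 - t) * r a + t * r z := by
      have hcomb := hr.2 (Set.mem_univ a) (Set.mem_univ z)
        (show (0:ℝ) ≤ 1 - t by linarith) ht.le (show (1 - t) + t = 1 by ring)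
      have heq : (1 - t) • a + t • z = a + t • (z - a) := by module
      rw [heq] at hcomb
      simpa [smul_eq_mul] using hcomb
    have hnorm : ‖a + t • (z - a) - u‖ ^ 2
        = ‖a - u‖ ^ 2 + 2 * (t * ⟪a - u, z - a⟫) + t ^ 2 * B := by
      have heq : a + t • (z - a) - u = (a - u) + t • (z - a) := by module
      rw [heq, norm_add_sq_real, real_inner_smul_right, norm_smul, hBdef]
      simp only [Real.norm_eq_abs, mul_pow, sq_abs]
    rw [hnorm] at h1
    have h2 : η * r (a + t • (z - a)) ≤ η * ((1 - t) * r a + t * r z) :=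
      mul_le_mul_of_nonneg_left hrz hη.le
    have h3 : 0 ≤ t * C + t ^ 2 / 2 * B := by nlinarith
    nlinarith
  have hC0 : 0 ≤ C := by
    by_contra hneg
    push_neg at hneg
    rcases eq_or_lt_of_le hB with h0 | hBpos
    · have := key 1 one_pos le_rfl
      nlinarith
    · have htpos : 0 < min 1 (-C / B) := by
        exact lt_min one_pos (div_pos (by linarith) hBpos)
      have h1 := key _ htpos (min_le_left _ _)
      have h2 : min 1 (-C / B) ≤ -C / B := min_le_right _ _
      have h3 : min 1 (-C / B) * B ≤ -C := by
        rw [le_div_iff₀ hBpos] at h2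
        linarith
      nlinarith
  have heq : ⟪a - u, a - z⟫ = -⟪a - u, z - a⟫ := by
    rw [← inner_neg_right, neg_sub]
  rw [heq]
  linarith

set_option maxHeartbeats 2000000 in
/-- Lemma 3 of the paper: for `0 < η ≤ 1/(L(K+1))`, the PIAG direction satisfies
`-‖d_k‖² ≤ -(μ/4) F_{k+1} + ηL ∑_{j=(k-K)₊}^{k-1} ‖d_j‖²`. -/
theorem stmt10
    {n m K : ℕ} (hm : 0 < m)
    (f : Fin m → EuclideanSpace ℝ (Fin n) → ℝ) (Li : Fin m → ℝ)
    (hLi : ∀ i, 0 ≤ Li i)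
    (hdiff : ∀ i, Differentiable ℝ (f i))
    (hLip : ∀ i x y, ‖gradient (f i) x - gradient (f i) y‖ ≤ Li i * ‖x - y‖)
    (fs : EuclideanSpace ℝ (Fin n) → ℝ)
    (hfs : ∀ z, fs z = (m : ℝ)⁻¹ * ∑ i, f i z)
    (L : ℝ) (hL : L = (m : ℝ)⁻¹ * ∑ i, Li i) (hLpos : 0 < L)
    (μ : ℝ) (hμ : 0 < μ)
    (hsc : ConvexOn ℝ Set.univ (fun z => fs z - μ / 2 * ‖z‖ ^ 2))
    (r : EuclideanSpace ℝ (Fin n) → ℝ)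
    (hr : ConvexOn ℝ Set.univ r) (hrlsc : LowerSemicontinuous r)
    (η : ℝ) (hη : 0 < η)
    (x : ℕ → EuclideanSpace ℝ (Fin n))
    (τ : Fin m → ℕ → ℕ) (hτ : ∀ i k, k - K ≤ τ i k ∧ τ i k ≤ k)
    (g : ℕ → EuclideanSpace ℝ (Fin n))
    (hg : ∀ k, g k = (m : ℝ)⁻¹ • ∑ i, gradient (f i) (x (τ i k)))
    (hiter : ∀ (k : ℕ) (z : EuclideanSpace ℝ (Fin n)),
      1 / 2 * ‖x (k + 1) - (x k - η • g k)‖ ^ 2 + η * r (x (k + 1))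
        ≤ 1 / 2 * ‖z - (x k - η • g k)‖ ^ 2 + η * r z)
    (d : ℕ → EuclideanSpace ℝ (Fin n)) (hd : ∀ k, d k = η⁻¹ • (x (k + 1) - x k))
    (xs : EuclideanSpace ℝ (Fin n)) (hxs : ∀ z, fs xs + r xs ≤ fs z + r z)
    (Fk : ℕ → ℝ) (hFk : ∀ k, Fk k = fs (x k) + r (x k) - (fs xs + r xs))
    (hηle : η ≤ 1 / (L * (K + 1)))
    (k : ℕ) :
    -‖d k‖ ^ 2 ≤ -(μ / 4) * Fk (k + 1)
      + η * L * ∑ j ∈ Finset.Ico (k - K) k, ‖d j‖ ^ 2 := by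
  have hη0 : η ≠ 0 := ne_of_gt hη
  -- step differences
  have hstep : ∀ j, x (j + 1) - x j = η • d j := by
    intro j
    rw [hd j, smul_smul, mul_inv_cancel₀ hη0, one_smul]
  -- variational inequality at xs
  have hvi : ⟪d k + g k, x (k + 1) - xs⟫ ≤ r xs - r (x (k + 1)) := by
    have h := prox_vi hr hη (hiter k) xs
    have heq : x (k + 1) - (x k - η • g k) = η • (d k + g k) := by
      rw [smul_add, ← hstep k]
      module
    rw [heq, real_inner_smul_left] at h
    exact (mul_le_mul_iff_right₀ hη).1 (by linarith)
  -- gradient of fs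
  obtain ⟨G, hGdef⟩ : ∃ G, G = (m : ℝ)⁻¹ • ∑ i, gradient (f i) (x (k + 1)) := ⟨_, rfl⟩
  have hGfs : HasGradientAt fs G (x (k + 1)) := by
    have hsum : HasFDerivAt (fun z : EuclideanSpace ℝ (Fin n) => ∑ i, f i z)
        (∑ i, InnerProductSpace.toDual ℝ (EuclideanSpace ℝ (Fin n))
          (gradient (f i) (x (k + 1)))) (x (k + 1)) :=
      HasFDerivAt.fun_sum (fun i _ => ((hdiff i) (x (k + 1))).hasGradientAt.hasFDerivAt)
    have h2 := hsum.const_mul ((m : ℝ)⁻¹)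
    have hfun : (fun z : EuclideanSpace ℝ (Fin n) => (m : ℝ)⁻¹ * ∑ i, f i z) = fs := by
      funext z; rw [hfs z]
    rw [hfun] at h2
    refine hasGradientAt_iff_hasFDerivAt.2 ?_
    have h5 : InnerProductSpace.toDual ℝ (EuclideanSpace ℝ (Fin n)) G
        = (m : ℝ)⁻¹ • ∑ i, InnerProductSpace.toDual ℝ (EuclideanSpace ℝ (Fin n))
            (gradient (f i) (x (k + 1))) := by
      rw [hGdef, map_smul, map_sum]
    rw [h5]
    exact h2
  -- gradient of the strongly convex part
  have hGsc : HasGradientAt (fun z : EuclideanSpace ℝ (Fin n) => fs z - μ / 2 * ‖z‖ ^ 2)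
      (G - μ • x (k + 1)) (x (k + 1)) := by
    have h1 : HasFDerivAt (fun z : EuclideanSpace ℝ (Fin n) => ⟪z, z⟫)
        ((fderivInnerCLM ℝ (x (k + 1), x (k + 1))).comp
          ((ContinuousLinearMap.id ℝ (EuclideanSpace ℝ (Fin n))).prod
            (ContinuousLinearMap.id ℝ (EuclideanSpace ℝ (Fin n))))) (x (k + 1)) :=
      (hasFDerivAt_id (x (k + 1))).inner ℝ (hasFDerivAt_id (x (k + 1)))
    have h2 := h1.const_mul (μ / 2)
    have hfun : (fun z : EuclideanSpace ℝ (Fin n) => μ / 2 * ⟪z, z⟫)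
        = fun z : EuclideanSpace ℝ (Fin n) => μ / 2 * ‖z‖ ^ 2 := by
      funext z; rw [real_inner_self_eq_norm_sq]
    rw [hfun] at h2
    have h3 : HasFDerivAt (fun z : EuclideanSpace ℝ (Fin n) => μ / 2 * ‖z‖ ^ 2)
        (InnerProductSpace.toDual ℝ (EuclideanSpace ℝ (Fin n)) (μ • x (k + 1))) (x (k + 1)) := by
      refine h2.congr_fderiv ?_
      symm
      ext v
      simp only [InnerProductSpace.toDual_apply_apply, ContinuousLinearMap.coe_smul', Pi.smul_apply,
        ContinuousLinearMap.coe_comp', Function.comp_apply, ContinuousLinearMap.prod_apply,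
        ContinuousLinearMap.coe_id', id_eq, fderivInnerCLM_apply, real_inner_smul_left,
        smul_eq_mul]
      rw [real_inner_comm]
      ring
    have h4 := hGfs.hasFDerivAt.sub h3
    refine hasGradientAt_iff_hasFDerivAt.2 ?_
    rw [map_sub]
    exact h4
  -- strong convexity inequality
  have hsc2 : fs (x (k + 1)) + ⟪G, xs - x (k + 1)⟫ + μ / 2 * ‖xs - x (k + 1)‖ ^ 2 ≤ fs xs := by
    have hscineq := grad_convex_lb hsc hGsc xs
    have e1 : ⟪G - μ • x (k + 1), xs - x (k + 1)⟫
        = ⟪G, xs - x (k + 1)⟫ - μ * ⟪x (k + 1), xs - x (k + 1)⟫ := by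
      rw [inner_sub_left, real_inner_smul_left]
    have e2 : ‖xs - x (k + 1)‖ ^ 2
        = ‖xs‖ ^ 2 - 2 * ⟪x (k + 1), xs - x (k + 1)⟫ - ‖x (k + 1)‖ ^ 2 := by
      rw [norm_sub_sq_real, inner_sub_right, real_inner_self_eq_norm_sq, real_inner_comm]
      ring
    rw [e1] at hscineq
    nlinarith [hscineq, e2, hμ]
  -- combine VI and strong convexity
  have hcomb : Fk (k + 1) + μ / 2 * ‖xs - x (k + 1)‖ ^ 2
      ≤ ⟪d k, xs - x (k + 1)⟫ + ⟪G - g k, x (k + 1) - xs⟫ := by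
    rw [hFk]
    have e3 : ⟪d k + g k, x (k + 1) - xs⟫
        = ⟪d k, x (k + 1) - xs⟫ + ⟪g k, x (k + 1) - xs⟫ := inner_add_left _ _ _
    have e4 : ⟪d k, xs - x (k + 1)⟫ = -⟪d k, x (k + 1) - xs⟫ := by
      rw [← inner_neg_right, neg_sub]
    have e5 : ⟪G, xs - x (k + 1)⟫ = -⟪G, x (k + 1) - xs⟫ := by
      rw [← inner_neg_right, neg_sub]
    have e6 : ⟪G - g k, x (k + 1) - xs⟫
        = ⟪G, x (k + 1) - xs⟫ - ⟪g k, x (k + 1) - xs⟫ := inner_sub_left _ _ _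
    rw [e4, e6]
    rw [e3] at hvi
    rw [e5] at hsc2
    linarith
  -- telescoping bound
  obtain ⟨S, hSdef⟩ : ∃ S : ℝ, S = ∑ j ∈ Finset.Ico (k - K) (k + 1), ‖d j‖ := ⟨_, rfl⟩
  have hS0 : 0 ≤ S := hSdef ▸ Finset.sum_nonneg fun j _ => norm_nonneg _
  have htel : ∀ t, k - K ≤ t → t ≤ k → ‖x (k + 1) - x t‖ ≤ η * S := by
    intro t ht1 ht2
    have htel1 : x (k + 1) - x t = ∑ j ∈ Finset.Ico t (k + 1), (x (j + 1) - x j) := by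
      rw [Finset.sum_Ico_eq_sub _ (by omega : t ≤ k + 1),
        Finset.sum_range_sub (fun j => x j), Finset.sum_range_sub (fun j => x j)]
      abel
    calc ‖x (k + 1) - x t‖ = ‖∑ j ∈ Finset.Ico t (k + 1), (x (j + 1) - x j)‖ := by rw [htel1]
      _ ≤ ∑ j ∈ Finset.Ico t (k + 1), ‖x (j + 1) - x j‖ := norm_sum_le _ _
      _ = ∑ j ∈ Finset.Ico t (k + 1), η * ‖d j‖ := by
          refine Finset.sum_congr rfl fun j _ => ?_
          rw [hstep j, norm_smul, Real.norm_eq_abs, abs_of_pos hη]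
      _ ≤ ∑ j ∈ Finset.Ico (k - K) (k + 1), η * ‖d j‖ := by
          refine Finset.sum_le_sum_of_subset_of_nonneg
            (Finset.Ico_subset_Ico ht1 le_rfl) fun j _ _ => ?_
          positivity
      _ = η * S := by rw [hSdef, Finset.mul_sum]
  -- error bound
  have herr : ‖G - g k‖ ≤ L * (η * S) := by
    have hdiffeq : G - g k
        = (m : ℝ)⁻¹ • ∑ i, (gradient (f i) (x (k + 1)) - gradient (f i) (x (τ i k))) := by
      rw [hGdef, hg k, ← smul_sub, ← Finset.sum_sub_distrib]
    rw [hdiffeq, norm_smul, Real.norm_eq_abs,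
      abs_of_pos (by positivity : (0:ℝ) < (m:ℝ)⁻¹)]
    have hbound : ‖∑ i, (gradient (f i) (x (k + 1)) - gradient (f i) (x (τ i k)))‖
        ≤ ∑ i, Li i * (η * S) := by
      refine (norm_sum_le _ _).trans (Finset.sum_le_sum fun i _ => ?_)
      refine (hLip i (x (k + 1)) (x (τ i k))).trans ?_
      exact mul_le_mul_of_nonneg_left (htel (τ i k) (hτ i k).1 (hτ i k).2) (hLi i)
    calc (m : ℝ)⁻¹ * ‖∑ i, (gradient (f i) (x (k + 1)) - gradient (f i) (x (τ i k)))‖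
        ≤ (m : ℝ)⁻¹ * ∑ i, Li i * (η * S) :=
          mul_le_mul_of_nonneg_left hbound (by positivity)
      _ = L * (η * S) := by rw [hL, ← Finset.sum_mul]; ring
  -- Cauchy–Schwarz
  obtain ⟨Q, hQdef⟩ : ∃ Q : ℝ, Q = ∑ j ∈ Finset.Ico (k - K) (k + 1), ‖d j‖ ^ 2 := ⟨_, rfl⟩
  obtain ⟨Q', hQ'def⟩ : ∃ Q' : ℝ, Q' = ∑ j ∈ Finset.Ico (k - K) k, ‖d j‖ ^ 2 := ⟨_, rfl⟩
  have hQ0 : 0 ≤ Q := hQdef ▸ Finset.sum_nonneg fun j _ => sq_nonneg _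
  have hQ'0 : 0 ≤ Q' := hQ'def ▸ Finset.sum_nonneg fun j _ => sq_nonneg _
  have hCS : S ^ 2 ≤ ((K : ℝ) + 1) * Q := by
    have h1 := sq_sum_le_card_mul_sum_sq (s := Finset.Ico (k - K) (k + 1))
      (f := fun j => ‖d j‖)
    have hcard : (((Finset.Ico (k - K) (k + 1)).card : ℕ) : ℝ) ≤ (K : ℝ) + 1 := by
      rw [Nat.card_Ico]
      exact_mod_cast (by omega : k + 1 - (k - K) ≤ K + 1)
    rw [hSdef, hQdef]
    calc (∑ j ∈ Finset.Ico (k - K) (k + 1), ‖d j‖) ^ 2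
        ≤ (((Finset.Ico (k - K) (k + 1)).card : ℕ) : ℝ)
            * ∑ j ∈ Finset.Ico (k - K) (k + 1), ‖d j‖ ^ 2 := by exact_mod_cast h1
      _ ≤ ((K : ℝ) + 1) * ∑ j ∈ Finset.Ico (k - K) (k + 1), ‖d j‖ ^ 2 :=
          mul_le_mul_of_nonneg_right hcard (hQdef ▸ hQ0)
  have hsplit : Q = Q' + ‖d k‖ ^ 2 := by
    rw [hQdef, hQ'def, Finset.sum_Ico_succ_top (Nat.sub_le k K)]
  -- step size facts
  have hηL1 : η * (L * ((K : ℝ) + 1)) ≤ 1 := by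
    rw [le_div_iff₀ (by positivity)] at hηle
    linarith
  have hηL : η * L ≤ 1 := by nlinarith [mul_pos hη hLpos]
  -- Young inequalities
  have hy1 : ⟪d k, xs - x (k + 1)⟫
      ≤ (1 / μ) * ‖d k‖ ^ 2 + μ / 4 * ‖xs - x (k + 1)‖ ^ 2 := by
    have h := real_inner_le_norm (d k) (xs - x (k + 1))
    have h1 : μ * ⟪d k, xs - x (k + 1)⟫ ≤ ‖d k‖ ^ 2 + μ ^ 2 / 4 * ‖xs - x (k + 1)‖ ^ 2 := by
      nlinarith [sq_nonneg (‖d k‖ - μ / 2 * ‖xs - x (k + 1)‖), hμ, h]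
    have h2 : ⟪d k, xs - x (k + 1)⟫
        ≤ (‖d k‖ ^ 2 + μ ^ 2 / 4 * ‖xs - x (k + 1)‖ ^ 2) / μ := by
      rw [le_div_iff₀ hμ]
      linarith
    have h3 : (‖d k‖ ^ 2 + μ ^ 2 / 4 * ‖xs - x (k + 1)‖ ^ 2) / μ
        = (1 / μ) * ‖d k‖ ^ 2 + μ / 4 * ‖xs - x (k + 1)‖ ^ 2 := by
      field_simp
    rw [h3] at h2
    linarith
  have hy2 : ⟪G - g k, x (k + 1) - xs⟫
      ≤ (1 / μ) * ‖G - g k‖ ^ 2 + μ / 4 * ‖xs - x (k + 1)‖ ^ 2 := by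
    have h := real_inner_le_norm (G - g k) (x (k + 1) - xs)
    rw [norm_sub_rev (x (k + 1)) xs] at h
    have h1 : μ * ⟪G - g k, x (k + 1) - xs⟫
        ≤ ‖G - g k‖ ^ 2 + μ ^ 2 / 4 * ‖xs - x (k + 1)‖ ^ 2 := by
      nlinarith [sq_nonneg (‖G - g k‖ - μ / 2 * ‖xs - x (k + 1)‖), hμ, h]
    have h2 : ⟪G - g k, x (k + 1) - xs⟫
        ≤ (‖G - g k‖ ^ 2 + μ ^ 2 / 4 * ‖xs - x (k + 1)‖ ^ 2) / μ := by
      rw [le_div_iff₀ hμ]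
      linarith
    have h3 : (‖G - g k‖ ^ 2 + μ ^ 2 / 4 * ‖xs - x (k + 1)‖ ^ 2) / μ
        = (1 / μ) * ‖G - g k‖ ^ 2 + μ / 4 * ‖xs - x (k + 1)‖ ^ 2 := by
      field_simp
    rw [h3] at h2
    linarith
  -- main bound
  have hmain : μ * Fk (k + 1) ≤ ‖d k‖ ^ 2 + ‖G - g k‖ ^ 2 := by
    have hF : Fk (k + 1) ≤ (1 / μ) * ‖d k‖ ^ 2 + (1 / μ) * ‖G - g k‖ ^ 2 := by linarith
    have h := mul_le_mul_of_nonneg_left hF hμ.le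
    have h2 : μ * ((1 / μ) * ‖d k‖ ^ 2 + (1 / μ) * ‖G - g k‖ ^ 2)
        = ‖d k‖ ^ 2 + ‖G - g k‖ ^ 2 := by
      field_simp
    rw [h2] at h
    linarith
  -- error squared bound
  have herr2 : ‖G - g k‖ ^ 2 ≤ η * L * Q := by
    have h1 : ‖G - g k‖ ^ 2 ≤ (L * (η * S)) ^ 2 := by
      nlinarith [norm_nonneg (G - g k), herr]
    have h4 : L ^ 2 * η ^ 2 * (((K:ℝ) + 1) * Q) ≤ η * L * Q := by
      have he : L ^ 2 * η ^ 2 * (((K:ℝ) + 1) * Q) = (η * L) * (η * (L * ((K:ℝ)+1))) * Q := by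
        ring
      rw [he]
      nlinarith [mul_nonneg (mul_nonneg (mul_pos hη hLpos).le hQ0)
        (sub_nonneg.2 hηL1)]
    nlinarith [mul_le_mul_of_nonneg_left hCS (by positivity : (0:ℝ) ≤ L ^ 2 * η ^ 2)]
  -- finish
  have hfinal : μ * Fk (k + 1) ≤ 2 * ‖d k‖ ^ 2 + η * L * Q' := by
    have h5 : η * L * Q = η * L * Q' + η * L * ‖d k‖ ^ 2 := by rw [hsplit]; ring
    have h6 : η * L * ‖d k‖ ^ 2 ≤ ‖d k‖ ^ 2 := mul_le_of_le_one_left (sq_nonneg _) hηL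
    linarith
  rw [← hQ'def]
  linarith [hfinal, sq_nonneg ‖d k‖, mul_nonneg (mul_pos hη hLpos).le hQ'0]
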